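/- If a density matrix ρ on C^N ⊗ C^M is separable, then its partial transpose ρ^{T_A} is positive semidefinite. Consequently, if ρ^{T_A} possesses at least one negative eigenvalue, then ρ is entangled; in particular, every tripartite pure state |Ψ⟩ ∈ C² ⊗ C^N ⊗ C^M whose qubit-loss residual state ρ_AB = Tr_qubit[|Ψ⟩⟨Ψ|] has a partial transpose with a negative eigenvalue is robust against the loss of the qubit. -/

import Mathlib

open scoped Kronecker ComplexConjugate ComplexOrder Matrix

noncomputable section

/-- A density matrix: positive semidefinite with trace 1. -/
def IsDensity {n : Type} [Fintype n] [DecidableEq n] (ρ : Matrix n n ℂ) : Prop :=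
  ρ.PosSemidef ∧ ρ.trace = 1

/-- Separability of a bipartite density matrix: a finite convex combination of
tensor (Kronecker) products of density matrices. -/
def Separable {n m : Type} [Fintype n] [DecidableEq n] [Fintype m] [DecidableEq m]
    (ρ : Matrix (n × m) (n × m) ℂ) : Prop :=
  ∃ (L : ℕ) (p : Fin L → ℝ) (A : Fin L → Matrix n n ℂ) (B : Fin L → Matrix m m ℂ),
    (∀ i, 0 < p i) ∧ (∑ i, p i) = 1 ∧ (∀ i, IsDensity (A i)) ∧ (∀ i, IsDensity (B i)) ∧
    ρ = ∑ i, (p i : ℂ) • (A i ⊗ₖ B i)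

/-- Partial trace over the first tensor factor. -/
def ptraceFst {k n : Type} [Fintype k] (ρ : Matrix (k × n) (k × n) ℂ) : Matrix n n ℂ :=
  fun i j => ∑ a, ρ (a, i) (a, j)

/-- Partial trace over the second tensor factor. -/
def ptraceSnd {n m : Type} [Fintype m] (ρ : Matrix (n × m) (n × m) ℂ) : Matrix n n ℂ :=
  fun i j => ∑ b, ρ (i, b) (j, b)

/-- The rank-one projection |ψ⟩⟨ψ|. -/
def proj {n : Type} (ψ : n → ℂ) : Matrix n n ℂ := Matrix.vecMulVec ψ (star ψ)

/-- Partial transpose with respect to the first tensor factor. -/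
def ptransposeFst {n m : Type} (ρ : Matrix (n × m) (n × m) ℂ) : Matrix (n × m) (n × m) ℂ :=
  fun x y => ρ (y.1, x.2) (x.1, y.2)

section Aux

open Matrix
open scoped Kronecker ComplexOrder

lemma kron_conjTranspose {n m : Type} [Fintype n] [Fintype m]
    (A : Matrix n n ℂ) (B : Matrix m m ℂ) : (A ⊗ₖ B)ᴴ = Aᴴ ⊗ₖ Bᴴ := by
  ext ⟨i, k⟩ ⟨j, l⟩
  simp [Matrix.conjTranspose_apply, Matrix.kroneckerMap_apply]

lemma psd_kron {n m : Type} [Fintype n] [Fintype m] [DecidableEq n] [DecidableEq m]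
    {A : Matrix n n ℂ} {B : Matrix m m ℂ}
    (hA : A.PosSemidef) (hB : B.PosSemidef) : (A ⊗ₖ B).PosSemidef := by
  exact hA.kronecker hB

lemma psd_smul {n : Type} [Fintype n] {A : Matrix n n ℂ} (hA : A.PosSemidef)
    {c : ℝ} (hc : 0 ≤ c) : ((c : ℂ) • A).PosSemidef := by
  refine Matrix.PosSemidef.of_dotProduct_mulVec_nonneg ?_ ?_
  · unfold Matrix.IsHermitian
    rw [Matrix.conjTranspose_smul, hA.1.eq]
    norm_num
  · intro x
    have h0 := hA.dotProduct_mulVec_nonneg x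
    have : dotProduct (star x) (((c : ℂ) • A) *ᵥ x)
        = (c : ℂ) * dotProduct (star x) (A *ᵥ x) := by
      rw [Matrix.smul_mulVec, dotProduct_smul, smul_eq_mul]
    rw [this]
    exact mul_nonneg (by exact_mod_cast hc) h0

lemma sep_psd {n m : Type} [Fintype n] [DecidableEq n] [Fintype m] [DecidableEq m]
    {ρ : Matrix (n × m) (n × m) ℂ} (h : Separable ρ) :
    (ptransposeFst ρ).PosSemidef := by
  obtain ⟨L, p, A, B, hp, _, hA, hB, rfl⟩ := h
  have heq : ptransposeFst (∑ i, (p i : ℂ) • (A i ⊗ₖ B i))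
      = ∑ i, (p i : ℂ) • ((A i)ᵀ ⊗ₖ B i) := by
    ext ⟨i, k⟩ ⟨j, l⟩
    simp only [ptransposeFst, Matrix.sum_apply, Matrix.smul_apply, Matrix.kroneckerMap_apply,
      Matrix.transpose_apply, smul_eq_mul]
  have hpsd : (∑ i, (p i : ℂ) • ((A i)ᵀ ⊗ₖ B i)).PosSemidef :=
    Finset.sum_induction _ Matrix.PosSemidef (fun a b ha hb => ha.add hb)
      Matrix.PosSemidef.zero
      (fun i _ => psd_smul (psd_kron (hA i).1.transpose (hB i).1) (hp i).le)
  rw [heq]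
  exact hpsd

end Aux

/-- Every separable density matrix on `ℂ^N ⊗ ℂ^M` has a positive
semidefinite partial transpose.  Consequently any tripartite pure state
`|Ψ⟩ ∈ ℂ² ⊗ ℂ^N ⊗ ℂ^M` whose qubit-loss residual state has a partial transpose with a
negative eigenvalue is robust against the loss of the qubit (the residual state is
entangled). -/
theorem stmt7 (N M : ℕ) :
    (∀ ρ : Matrix (Fin N × Fin M) (Fin N × Fin M) ℂ,
      IsDensity ρ → Separable ρ → (ptransposeFst ρ).PosSemidef) ∧
    (∀ Ψ : Fin 2 × (Fin N × Fin M) → ℂ, (∑ x, ‖Ψ x‖ ^ 2 = 1) →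
      (∃ (c : ℝ) (v : Fin N × Fin M → ℂ), c < 0 ∧ v ≠ 0 ∧
        (ptransposeFst (ptraceFst (proj Ψ))).mulVec v = (c : ℂ) • v) →
      ¬ Separable (ptraceFst (proj Ψ))) := by
  constructor
  · intro ρ _ hsep
    exact sep_psd hsep
  · rintro Ψ _ ⟨c, v, hc, hv, heig⟩ hsep
    have hpsd := sep_psd hsep
    have h0 := hpsd.dotProduct_mulVec_nonneg v
    rw [heig] at h0
    have hdp : dotProduct (star v) ((c : ℂ) • v)
        = (c : ℂ) * dotProduct (star v) v := by
      rw [dotProduct_smul, smul_eq_mul]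
    rw [hdp] at h0
    have hpos : 0 < dotProduct (star v) v :=
      Matrix.dotProduct_star_self_pos_iff.mpr hv
    have : (c : ℂ) * dotProduct (star v) v < 0 :=
      mul_neg_of_neg_of_pos (by exact_mod_cast hc) hpos
    exact absurd h0 (not_le_of_gt this)
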